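/- For all nonnegative integers i and j, ∑_{k=-min(i,j)}^{min(i,j)} (−1)^k·C(2i, i+k)·C(2j, j+k) = C(2i,i)·C(2j,j)/C(i+j, i) (Von Szily's identity); in particular S(i,j) := C(2i,i)·C(2j,j)/C(i+j,i) is an integer. -/

import Mathlib

open Polynomial Finset

noncomputable def vsP (i j : ℕ) : Polynomial ℤ :=
  (X + C (-1)) ^ (2 * i) * (X + 1) ^ (2 * j)

noncomputable def vsT (i j : ℕ) : ℤ := (vsP i j).coeff (i + j)

lemma vsT_zero (j : ℕ) : vsT 0 j = (2 * j).choose j := by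
  simp [vsT, vsP, Polynomial.coeff_X_add_one_pow]

lemma vsT_rec (i j : ℕ) : vsT i (j + 1) - vsT (i + 1) j = 4 * vsT i j := by
  have h : vsP i (j + 1) - vsP (i + 1) j = C 4 * (vsP i j * X) := by
    unfold vsP
    have h1 : (C (-1) : Polynomial ℤ) = -1 := by simp
    have h4 : (C 4 : Polynomial ℤ) = 4 := by simp [Polynomial.C_eq_natCast]
    rw [h1, h4]
    ring
  have h2 := congrArg (fun p => Polynomial.coeff p (i + j + 1)) h
  simp only [Polynomial.coeff_sub, Polynomial.coeff_C_mul, Polynomial.coeff_mul_X] at h2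
  have e1 : vsT i (j + 1) = (vsP i (j + 1)).coeff (i + j + 1) := by
    unfold vsT; congr 1; try omega
  have e2 : vsT (i + 1) j = (vsP (i + 1) j).coeff (i + j + 1) := by
    unfold vsT; congr 1; try omega
  rw [e1, e2, h2]; rfl

lemma vs_arith (i j : ℕ) :
    ((i + 1 + j).choose (i + 1) : ℚ) *
      (4 * (((2 * i).choose i : ℚ) * ((2 * j).choose j) / ((i + j).choose i))
        - ((2 * i).choose i : ℚ) * ((2 * (j + 1)).choose (j + 1)) / ((i + (j + 1)).choose i))
    = ((2 * (i + 1)).choose (i + 1) : ℚ) * ((2 * j).choose j) := by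
  have e1 : i + 1 + j = i + j + 1 := by omega
  have e2 : 2 * (j + 1) = 2 * j + 1 + 1 := by omega
  have e3 : i + (j + 1) = i + j + 1 := by omega
  have e4 : 2 * (i + 1) = 2 * i + 1 + 1 := by omega
  rw [e1, e2, e3, e4]
  rw [Nat.cast_choose ℚ (by omega : i + 1 ≤ i + j + 1),
      Nat.cast_choose ℚ (by omega : i ≤ 2 * i),
      Nat.cast_choose ℚ (by omega : j ≤ 2 * j),
      Nat.cast_choose ℚ (by omega : i ≤ i + j),
      Nat.cast_choose ℚ (by omega : j + 1 ≤ 2 * j + 1 + 1),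
      Nat.cast_choose ℚ (by omega : i ≤ i + j + 1),
      Nat.cast_choose ℚ (by omega : i + 1 ≤ 2 * i + 1 + 1)]
  have s1 : i + j + 1 - (i + 1) = j := by omega
  have s2 : 2 * i - i = i := by omega
  have s3 : 2 * j - j = j := by omega
  have s4 : i + j - i = j := by omega
  have s5 : 2 * j + 1 + 1 - (j + 1) = j + 1 := by omega
  have s6 : i + j + 1 - i = j + 1 := by omega
  have s7 : 2 * i + 1 + 1 - (i + 1) = i + 1 := by omega
  rw [s1, s2, s3, s4, s5, s6, s7]
  simp only [Nat.factorial_succ]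
  have hi' : ((i.factorial : ℚ)) ≠ 0 := by positivity
  have hj' : ((j.factorial : ℚ)) ≠ 0 := by positivity
  have hij' : (((i + j).factorial : ℚ)) ≠ 0 := by positivity
  have h2i' : (((2 * i).factorial : ℚ)) ≠ 0 := by positivity
  have h2j' : (((2 * j).factorial : ℚ)) ≠ 0 := by positivity
  have hii : ((i : ℚ) + 1) ≠ 0 := by positivity
  have hjj : ((j : ℚ) + 1) ≠ 0 := by positivity
  have hijj : ((i : ℚ) + j + 1) ≠ 0 := by positivity
  field_simp
  push_cast
  ring

lemma vsT_eq (i : ℕ) : ∀ j : ℕ,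
    ((i + j).choose i : ℚ) * ((-1) ^ i * (vsT i j : ℚ)) =
      ((2 * i).choose i : ℚ) * ((2 * j).choose j) := by
  induction i with
  | zero => intro j; simp [vsT_zero]
  | succ i ih =>
    intro j
    have h1 := ih j
    have h2 := ih (j + 1)
    have hB : ((i + j).choose i : ℚ) ≠ 0 := by
      exact_mod_cast (Nat.choose_pos (by omega)).ne'
    have hA : ((i + (j + 1)).choose i : ℚ) ≠ 0 := by
      exact_mod_cast (Nat.choose_pos (by omega)).ne'
    have es : ((-1 : ℚ)) ^ i * (vsT i j : ℚ) =
        ((2 * i).choose i : ℚ) * ((2 * j).choose j) / ((i + j).choose i) := by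
      rw [eq_div_iff hB]; linear_combination h1
    have et : ((-1 : ℚ)) ^ i * (vsT i (j + 1) : ℚ) =
        ((2 * i).choose i : ℚ) * ((2 * (j + 1)).choose (j + 1)) / ((i + (j + 1)).choose i) := by
      rw [eq_div_iff hA]; linear_combination h2
    have hT : (vsT (i + 1) j : ℚ) = (vsT i (j + 1) : ℚ) - 4 * (vsT i j : ℚ) := by
      have := vsT_rec i j
      push_cast [show vsT (i + 1) j = vsT i (j + 1) - 4 * vsT i j from by linarith]
      ring
    calc ((i + 1 + j).choose (i + 1) : ℚ) * ((-1) ^ (i + 1) * (vsT (i + 1) j : ℚ))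
        = ((i + 1 + j).choose (i + 1) : ℚ) *
            (4 * ((-1) ^ i * (vsT i j : ℚ)) - (-1) ^ i * (vsT i (j + 1) : ℚ)) := by
          rw [hT]; ring
      _ = ((2 * (i + 1)).choose (i + 1) : ℚ) * ((2 * j).choose j) := by
          rw [es, et]; exact vs_arith i j

lemma vs_main (i j : ℕ) :
    ((i + j).choose i : ℤ) * ((-1) ^ i * vsT i j) =
      ((2 * i).choose i : ℤ) * ((2 * j).choose j) := by
  have h := vsT_eq i j
  have : (((i + j).choose i : ℤ) * ((-1) ^ i * vsT i j) : ℚ) =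
      (((2 * i).choose i : ℤ) * ((2 * j).choose j) : ℚ) := by
    push_cast at h ⊢; linear_combination h
  exact_mod_cast this

lemma vs_neg_one_pow_congr (m n : ℕ) (h : m % 2 = n % 2) : ((-1 : ℤ)) ^ m = (-1) ^ n := by
  rcases Nat.even_or_odd m with hm | hm
  · have hn : Even n := by rw [Nat.even_iff] at hm ⊢; omega
    rw [hm.neg_one_pow, hn.neg_one_pow]
  · have hn : Odd n := by rw [Nat.odd_iff] at hm ⊢; omega
    rw [hm.neg_one_pow, hn.neg_one_pow]

lemma vsT_sum (i j : ℕ) : vsT i j =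
    ∑ a ∈ Finset.range (i + j + 1),
      (-1 : ℤ) ^ (2 * i - a) * ((2 * i).choose a) * ((2 * j).choose (i + j - a)) := by
  unfold vsT vsP
  rw [Polynomial.coeff_mul, Finset.Nat.sum_antidiagonal_eq_sum_range_succ_mk]
  refine Finset.sum_congr rfl fun a _ => ?_
  rw [Polynomial.coeff_X_add_C_pow, Polynomial.coeff_X_add_one_pow]

lemma vs_sum (i j : ℕ) :
    (∑ k ∈ Finset.Icc (-(min i j : ℤ)) (min i j : ℤ),
        (-1) ^ k.toNat * (-1) ^ (-k).toNat *
          ((2 * i).choose ((i : ℤ) + k).toNat : ℤ) * ((2 * j).choose ((j : ℤ) + k).toNat : ℤ)) =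
      (-1) ^ i * vsT i j := by
  rw [vsT_sum, Finset.mul_sum]
  set m := min i j with hm
  have hsub : Finset.Icc (i - m) (i + m) ⊆ Finset.range (i + j + 1) := by
    intro a ha
    simp only [Finset.mem_Icc] at ha
    simp only [Finset.mem_range]
    omega
  rw [← Finset.sum_subset hsub ?side]
  case side =>
    intro a ha hna
    simp only [Finset.mem_range] at ha
    simp only [Finset.mem_Icc, not_and_or, not_le] at hna
    have : 2 * i < a ∨ 2 * j < i + j - a := by omega
    rcases this with h | h
    · rw [Nat.choose_eq_zero_of_lt h]; ring
    · rw [Nat.choose_eq_zero_of_lt h]; ring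
  refine Finset.sum_nbij' (fun k => ((i : ℤ) + k).toNat) (fun a => (a : ℤ) - i) ?_ ?_ ?_ ?_ ?_
  · intro k hk; simp only [Finset.mem_Icc] at hk ⊢; omega
  · intro a ha; simp only [Finset.mem_Icc] at ha ⊢; omega
  · intro k hk; simp only [Finset.mem_Icc] at hk; omega
  · intro a ha; simp only [Finset.mem_Icc] at ha; omega
  · intro k hk
    simp only [Finset.mem_Icc] at hk
    have hch : ((2 * j).choose ((j : ℤ) + k).toNat) =
        (2 * j).choose (i + j - ((i : ℤ) + k).toNat) := by
      have hle : ((j : ℤ) + k).toNat ≤ 2 * j := by omega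
      rw [← Nat.choose_symm hle]
      congr 1
      omega
    rw [hch]
    have hsign : ((-1 : ℤ)) ^ (k.toNat + (-k).toNat) =
        (-1) ^ (i + (2 * i - ((i : ℤ) + k).toNat)) := by
      apply vs_neg_one_pow_congr
      omega
    rw [pow_add, pow_add] at hsign
    push_cast
    linear_combination (((2 * i).choose (((i : ℤ) + k).toNat) : ℤ) *
      ((2 * j).choose (i + j - ((i : ℤ) + k).toNat) : ℤ)) * hsign

/-- Von Szily's identity: ∑_{k=-min(i,j)}^{min(i,j)} (−1)^k C(2i,i+k) C(2j,j+k)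
equals C(2i,i)·C(2j,j)/C(i+j,i); in particular the quotient is an integer. -/
theorem von_szily (i j : ℕ) :
    ((i + j).choose i : ℤ) ∣ ((2 * i).choose i : ℤ) * ((2 * j).choose j : ℤ) ∧
    (∑ k ∈ Finset.Icc (-(min i j : ℤ)) (min i j : ℤ),
        (-1) ^ k.toNat * (-1) ^ (-k).toNat *
          ((2 * i).choose ((i : ℤ) + k).toNat : ℤ) * ((2 * j).choose ((j : ℤ) + k).toNat : ℤ)) =
      ((2 * i).choose i : ℤ) * ((2 * j).choose j : ℤ) / ((i + j).choose i : ℤ) := by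
  have hmain := vs_main i j
  have hc : ((i + j).choose i : ℤ) ≠ 0 := by
    exact_mod_cast (Nat.choose_pos (Nat.le_add_right i j)).ne'
  constructor
  · exact ⟨(-1) ^ i * vsT i j, hmain.symm⟩
  · rw [vs_sum, ← hmain, Int.mul_ediv_cancel_left _ hc]
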